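/- (Lemma 1, curvature bound, blockwise form.) For every user k ∈ {1,…,K}, every α ∈ M, every s_k ∈ ℝ^n with ‖s_k‖₁ ≤ β, and every γ ∈ (0,1], letting α̂ be the vector equal to α except that its k-th block is replaced by (1 − γ)α_k + γ s_k, one has (2/γ²)·( f(α̂) − f(α) − γ·⟨s_k − α_k, ∇_k f(α)⟩ ) ≤ 4β²·d_k(w)·( c_k·‖A_k‖₁² + μ₁ ). Consequently the global product curvature constant C⊗_f = Σ_k C_f^k of f over M satisfies C⊗_f ≤ 4β² Σ_{k=1}^K d_k(w)·( c_k·‖A_k‖₁² + μ₁ ). -/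

import Mathlib

open scoped RealInnerProductSpace BigOperators

abbrev Vec (n : ℕ) := EuclideanSpace ℝ (Fin n)

/-- Degree of user `k`: `d_k(w) = Σ_{l≠k} w_{k,l}`. -/
def degW {K : ℕ} (W : Fin K → Fin K → ℝ) (k : Fin K) : ℝ :=
  ∑ l ∈ Finset.univ.filter (fun l => l ≠ k), W k l

/-- The boosting objective
`f(α) = Σ_k d_k(w) c_k log(Σ_i exp(−(A_k α_k)_i)) + (μ₁/2) Σ_{k<l} w_{k,l} ‖α_k − α_l‖²`. -/
noncomputable def fObj {K n : ℕ} {m : Fin K → ℕ}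
    (A : ∀ k, Matrix (Fin (m k)) (Fin n) ℝ) (c : Fin K → ℝ)
    (W : Fin K → Fin K → ℝ) (μ₁ : ℝ) (α : Fin K → Vec n) : ℝ :=
  (∑ k, degW W k * c k *
      Real.log (∑ i, Real.exp (-(Matrix.mulVec (A k) (α k) i))))
    + μ₁ / 2 * ∑ k, ∑ l ∈ Finset.univ.filter (fun l => k < l),
        W k l * ‖α k - α l‖ ^ 2

/-- The partial gradient `∇_k f(α)` of `f` with respect to the block `α_k`. -/
noncomputable def gradBlk {K n : ℕ} (f : (Fin K → Vec n) → ℝ)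
    (α : Fin K → Vec n) (k : Fin K) : Vec n :=
  gradient (fun x => f (Function.update α k x)) (α k)

/-- `‖A‖₁`: the maximum ℓ1 norm of a row of `A`. -/
noncomputable def rowNormOne {m n : ℕ} (A : Matrix (Fin m) (Fin n) ℝ) : ℝ :=
  ⨆ i, ∑ j, |A i j|

/-- The ℓ1 norm on `ℝ^n`. -/
def l1Norm {n : ℕ} (x : Vec n) : ℝ := ∑ j, |x j|

section Aux

open Finset

-- ===== vector lemmas =====
lemma vec_norm_sq {n : ℕ} (y : Vec n) : ‖y‖ ^ 2 = ∑ j, y j ^ 2 := by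
  rw [EuclideanSpace.norm_eq, Real.sq_sqrt (by positivity)]
  simp [sq_abs]

lemma norm_le_l1 {n : ℕ} (y : Vec n) : ‖y‖ ^ 2 ≤ l1Norm y ^ 2 := by
  rw [vec_norm_sq, l1Norm]
  calc ∑ j, y j ^ 2 = ∑ j, |y j| ^ 2 := by simp [sq_abs]
    _ ≤ (∑ j, |y j|) ^ 2 := Finset.sum_sq_le_sq_sum_of_nonneg fun i _ => abs_nonneg _

lemma l1Norm_nonneg {n : ℕ} (y : Vec n) : 0 ≤ l1Norm y :=
  Finset.sum_nonneg fun i _ => abs_nonneg _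

lemma rowNormOne_nonneg {m n : ℕ} (A : Matrix (Fin m) (Fin n) ℝ) : 0 ≤ rowNormOne A := by
  rcases Nat.eq_zero_or_pos m with h | h
  · subst h
    rw [rowNormOne, Real.iSup_of_isEmpty]
  · haveI : NeZero m := ⟨h.ne'⟩
    refine le_trans ?_ (le_ciSup (f := fun i => ∑ j, |A i j|)
      (Set.Finite.bddAbove (Set.finite_range _)) (⟨0, h⟩ : Fin m))
    positivity

lemma row_le_rowNormOne {m n : ℕ} (A : Matrix (Fin m) (Fin n) ℝ) (i : Fin m) :
    ∑ j, |A i j| ≤ rowNormOne A := by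
  rw [rowNormOne]
  exact le_ciSup (f := fun i => ∑ j, |A i j|) (Set.Finite.bddAbove (Set.finite_range _)) i

lemma mulVec_abs_le {m n : ℕ} (A : Matrix (Fin m) (Fin n) ℝ) (u : Vec n) (i : Fin m) :
    |A.mulVec u i| ≤ rowNormOne A * l1Norm u := by
  have h1 : |A.mulVec u i| ≤ ∑ j, |A i j| * |u j| := by
    rw [Matrix.mulVec, dotProduct]
    refine (Finset.abs_sum_le_sum_abs _ _).trans ?_
    simp [abs_mul, le_refl]
  refine h1.trans ?_
  have h2 : ∀ j, |A i j| * |u j| ≤ |A i j| * l1Norm u := by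
    intro j
    refine mul_le_mul_of_nonneg_left ?_ (abs_nonneg _)
    exact Finset.single_le_sum (f := fun j => |u j|) (fun j _ => abs_nonneg _) (mem_univ j)
  calc ∑ j, |A i j| * |u j| ≤ ∑ j, |A i j| * l1Norm u := Finset.sum_le_sum fun j _ => h2 j
    _ = (∑ j, |A i j|) * l1Norm u := by rw [Finset.sum_mul]
    _ ≤ rowNormOne A * l1Norm u :=
        mul_le_mul_of_nonneg_right (row_le_rowNormOne A i) (l1Norm_nonneg u)

-- ===== CLMs =====
noncomputable def rowL {m n : ℕ} (A : Matrix (Fin m) (Fin n) ℝ) (i : Fin m) :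
    Vec n →L[ℝ] ℝ := ∑ j, A i j • EuclideanSpace.proj j

lemma rowL_apply {m n : ℕ} (A : Matrix (Fin m) (Fin n) ℝ) (i : Fin m) (x : Vec n) :
    rowL A i x = A.mulVec x i := by
  simp [rowL, Matrix.mulVec, dotProduct, ContinuousLinearMap.sum_apply]

lemma hasF_row {m n : ℕ} (A : Matrix (Fin m) (Fin n) ℝ) (i : Fin m) (x : Vec n) :
    HasFDerivAt (fun x : Vec n => A.mulVec x i) (rowL A i) x := by
  have : (fun x : Vec n => A.mulVec x i) = fun x => rowL A i x := by
    funext x; rw [rowL_apply]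
  rw [this]
  exact (rowL A i).hasFDerivAt

noncomputable def normSqL {n : ℕ} (a x : Vec n) : Vec n →L[ℝ] ℝ :=
  ∑ j, (2 * (x j - a j)) • EuclideanSpace.proj j

lemma normSqL_apply {n : ℕ} (a x u : Vec n) :
    normSqL a x u = ∑ j, 2 * (x j - a j) * u j := by
  simp [normSqL, ContinuousLinearMap.sum_apply, mul_assoc]

lemma hasF_normsq {n : ℕ} (a x : Vec n) :
    HasFDerivAt (fun x : Vec n => ‖x - a‖ ^ 2) (normSqL a x) x := by
  have h : (fun x : Vec n => ‖x - a‖ ^ 2) = fun x => ∑ j, (x j - a j) ^ 2 := by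
    funext x
    rw [vec_norm_sq]
    simp
  rw [h, normSqL]
  refine HasFDerivAt.fun_sum fun j _ => ?_
  have h1 : HasFDerivAt (fun x : Vec n => x j - a j) (EuclideanSpace.proj (𝕜 := ℝ) j) x :=
    (EuclideanSpace.proj (𝕜 := ℝ) j).hasFDerivAt.sub_const (a j)
  have h2 := h1.mul h1
  have h3 : (fun x : Vec n => (x j - a j) ^ 2) = fun x => (x j - a j) * (x j - a j) := by
    funext x; ring
  rw [h3, two_mul, add_smul]
  exact h2

noncomputable def logSL {m n : ℕ} (B : Matrix (Fin m) (Fin n) ℝ) (x₀ : Vec n) :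
    Vec n →L[ℝ] ℝ :=
  (∑ i, Real.exp (-(B.mulVec x₀ i)))⁻¹ • ∑ i, Real.exp (-(B.mulVec x₀ i)) • (-(rowL B i))

lemma logSL_apply {m n : ℕ} (B : Matrix (Fin m) (Fin n) ℝ) (x₀ u : Vec n) :
    logSL B x₀ u = (∑ i, Real.exp (-(B.mulVec x₀ i)))⁻¹ *
      ∑ i, Real.exp (-(B.mulVec x₀ i)) * (-(B.mulVec u i)) := by
  simp [logSL, ContinuousLinearMap.sum_apply, rowL_apply, mul_neg]

lemma hasF_logS {m n : ℕ} (B : Matrix (Fin m) (Fin n) ℝ) (x₀ : Vec n) :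
    HasFDerivAt (fun x : Vec n => Real.log (∑ i, Real.exp (-(B.mulVec x i))))
      (logSL B x₀) x₀ := by
  rcases Nat.eq_zero_or_pos m with hm | hm
  · haveI : IsEmpty (Fin m) := ⟨fun i => absurd i.2 (by omega)⟩
    have h0 : (fun x : Vec n => Real.log (∑ i, Real.exp (-(B.mulVec x i)))) = fun _ => 0 := by
      funext x; simp
    have hL0 : logSL B x₀ = 0 := by
      rw [logSL]; simp
    rw [h0, hL0]
    exact hasFDerivAt_const 0 x₀
  · haveI : Nonempty (Fin m) := Fin.pos_iff_nonempty.1 hm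
    have hSpos : (0:ℝ) < ∑ i, Real.exp (-(B.mulVec x₀ i)) :=
      Finset.sum_pos (fun i _ => Real.exp_pos _) univ_nonempty
    have hSd : HasFDerivAt (fun x : Vec n => ∑ i, Real.exp (-(B.mulVec x i)))
        (∑ i, Real.exp (-(B.mulVec x₀ i)) • (-(rowL B i))) x₀ :=
      HasFDerivAt.fun_sum fun i _ => ((hasF_row B i x₀).neg).exp
    exact hSd.log hSpos.ne'

-- ===== quadratic expansion =====
lemma quad_remainder {n : ℕ} (a x₀ u : Vec n) (γ : ℝ) :
    ‖(x₀ + γ • u) - a‖ ^ 2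
      = ‖x₀ - a‖ ^ 2 + γ * normSqL a x₀ u + γ ^ 2 * ‖u‖ ^ 2 := by
  rw [vec_norm_sq, vec_norm_sq, vec_norm_sq, normSqL_apply, Finset.mul_sum, Finset.mul_sum,
    ← Finset.sum_add_distrib, ← Finset.sum_add_distrib]
  refine Finset.sum_congr rfl fun j _ => ?_
  have h1 : ((x₀ + γ • u) - a) j = x₀ j + γ * u j - a j := by
    simp [PiLp.add_apply, PiLp.sub_apply, PiLp.smul_apply, smul_eq_mul]
  have h2 : (x₀ - a) j = x₀ j - a j := by simp [PiLp.sub_apply]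
  rw [h1, h2]
  ring


lemma lse_key {m : ℕ} (hm : 0 < m) (p v : Fin m → ℝ) (hp : ∀ i, 0 < p i)
    (M : ℝ) (hv : ∀ i, |v i| ≤ M) :
    Real.log (∑ i, p i * Real.exp (v i)) ≤
      Real.log (∑ i, p i) + (∑ i, p i * v i) / (∑ i, p i) + M ^ 2 / 2 := by
  haveI : NeZero m := ⟨hm.ne'⟩
  set N : ℝ → ℝ := fun t => ∑ i, p i * Real.exp (t * v i) with hNdef
  set N1 : ℝ → ℝ := fun t => ∑ i, p i * (Real.exp (t * v i) * v i) with hN1def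
  set N2 : ℝ → ℝ := fun t => ∑ i, p i * (Real.exp (t * v i) * v i * v i) with hN2def
  have hNpos : ∀ t, 0 < N t := by
    intro t
    exact Finset.sum_pos (fun i _ => mul_pos (hp i) (Real.exp_pos _)) univ_nonempty
  have hN : ∀ t, HasDerivAt N (N1 t) t := by
    intro t
    exact HasDerivAt.fun_sum fun i _ => ((hasDerivAt_mul_const (v i)).exp).const_mul (p i)
  have hN1 : ∀ t, HasDerivAt N1 (N2 t) t := by
    intro t
    refine HasDerivAt.fun_sum fun i _ => ?_
    have h : HasDerivAt (fun t : ℝ => p i * (Real.exp (t * v i) * v i))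
        (p i * (Real.exp (t * v i) * v i * v i)) t := by
      simpa [mul_comm, mul_assoc, mul_left_comm] using
        ((((hasDerivAt_mul_const (v i)).exp).mul_const (v i)).const_mul (p i) :
          HasDerivAt _ (p i * (Real.exp (t * v i) * v i * v i)) t)
    exact h
  have hN2le : ∀ t, N2 t ≤ M ^ 2 * N t := by
    intro t
    rw [hN2def, hNdef, Finset.mul_sum]
    refine Finset.sum_le_sum fun i _ => ?_
    have hv2 : v i ^ 2 ≤ M ^ 2 := sq_le_sq' (neg_le_of_abs_le (hv i)) (le_of_abs_le (hv i))
    have hpe : 0 < p i * Real.exp (t * v i) := mul_pos (hp i) (Real.exp_pos _)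
    calc p i * (Real.exp (t * v i) * v i * v i)
        = (p i * Real.exp (t * v i)) * v i ^ 2 := by ring
      _ ≤ (p i * Real.exp (t * v i)) * M ^ 2 := by
          exact mul_le_mul_of_nonneg_left hv2 hpe.le
      _ = M ^ 2 * (p i * Real.exp (t * v i)) := by ring
  -- r is the derivative of g
  set r : ℝ → ℝ := fun t => N1 0 / N 0 + M ^ 2 * t - N1 t / N t with hrdef
  have hr : ∀ t, HasDerivAt r (M ^ 2 - (N2 t * N t - N1 t * N1 t) / (N t) ^ 2) t := by
    intro t
    have h1 : HasDerivAt (fun t : ℝ => N1 0 / N 0 + M ^ 2 * t) (M ^ 2) t := by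
      simpa using ((hasDerivAt_id t).const_mul (M ^ 2)).const_add (N1 0 / N 0)
    exact h1.sub ((hN1 t).div (hN t) (hNpos t).ne')
  have hrderiv_nonneg : ∀ t, 0 ≤ M ^ 2 - (N2 t * N t - N1 t * N1 t) / (N t) ^ 2 := by
    intro t
    rw [sub_nonneg, div_le_iff₀ (pow_pos (hNpos t) 2)]
    nlinarith [hN2le t, hNpos t, sq_nonneg (N1 t)]
  have hrmono : Monotone r := by
    refine monotone_of_deriv_nonneg (fun t => (hr t).differentiableAt) fun t => ?_
    rw [(hr t).deriv]; exact hrderiv_nonneg t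
  have hr0 : r 0 = 0 := by simp [hrdef]
  have hrnn : ∀ t, 0 ≤ t → 0 ≤ r t := fun t ht => hr0 ▸ hrmono ht
  set g : ℝ → ℝ := fun t =>
    Real.log (N 0) + N1 0 / N 0 * t + M ^ 2 / 2 * t ^ 2 - Real.log (N t) with hgdef
  have hg : ∀ t, HasDerivAt g (r t) t := by
    intro t
    have h1 : HasDerivAt (fun t : ℝ =>
        Real.log (N 0) + N1 0 / N 0 * t + M ^ 2 / 2 * t ^ 2)
        (N1 0 / N 0 + M ^ 2 * t) t := by
      have ha : HasDerivAt (fun t : ℝ => Real.log (N 0) + N1 0 / N 0 * t) (N1 0 / N 0) t := by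
        simpa using ((hasDerivAt_id t).const_mul (N1 0 / N 0)).const_add (Real.log (N 0))
      have hb : HasDerivAt (fun t : ℝ => M ^ 2 / 2 * t ^ 2) (M ^ 2 / 2 * (2 * t)) t := by
        simpa using (hasDerivAt_pow 2 t).const_mul (M ^ 2 / 2)
      have := ha.fun_add hb
      exact this.congr_deriv (by ring)
    have h2 : HasDerivAt (fun t => Real.log (N t)) (N1 t / N t) t :=
      (hN t).log (hNpos t).ne'
    exact h1.sub h2
  have hg01 : g 0 ≤ g 1 := by
    have : MonotoneOn g (Set.Icc (0:ℝ) 1) := by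
      refine monotoneOn_of_deriv_nonneg (convex_Icc 0 1)
        (fun t _ => (hg t).differentiableAt.continuousAt.continuousWithinAt)
        (fun t ht => (hg t).differentiableAt.differentiableWithinAt) fun t ht => ?_
      rw [(hg t).deriv]
      rw [interior_Icc] at ht
      exact hrnn t ht.1.le
    exact this (Set.left_mem_Icc.2 zero_le_one) (Set.right_mem_Icc.2 zero_le_one) zero_le_one
  have hg0 : g 0 = 0 := by simp [hgdef]
  have hN1' : N 1 = ∑ i, p i * Real.exp (v i) := by simp [hNdef]
  have hN0 : N 0 = ∑ i, p i := by simp [hNdef]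
  have hN10 : N1 0 = ∑ i, p i * v i := by simp [hN1def]
  have := hg0 ▸ hg01
  rw [hgdef] at this
  simp only [one_pow, mul_one] at this
  rw [hN1', hN0, hN10] at this
  linarith

-- appended to d.lean content for testing
lemma log_remainder {m n : ℕ} (B : Matrix (Fin m) (Fin n) ℝ) (x₀ u : Vec n)
    (γ : ℝ) (hγ0 : 0 < γ) (R : ℝ) (hR0 : 0 ≤ R) (hR : l1Norm u ≤ R) :
    Real.log (∑ i, Real.exp (-(B.mulVec (x₀ + γ • u) i)))
      - Real.log (∑ i, Real.exp (-(B.mulVec x₀ i)))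
      - γ * logSL B x₀ u
      ≤ (γ * (rowNormOne B * R)) ^ 2 / 2 := by
  rcases Nat.eq_zero_or_pos m with hm | hm
  · haveI : IsEmpty (Fin m) := ⟨fun i => absurd i.2 (by omega)⟩
    have hL0 : logSL B x₀ = 0 := by rw [logSL]; simp
    rw [hL0]
    simp
    positivity
  · haveI : Nonempty (Fin m) := Fin.pos_iff_nonempty.1 hm
    set p : Fin m → ℝ := fun i => Real.exp (-(B.mulVec x₀ i)) with hp
    set v : Fin m → ℝ := fun i => -(γ * B.mulVec u i) with hv
    have hmv : ∀ i, B.mulVec (x₀ + γ • u) i = B.mulVec x₀ i + γ * B.mulVec u i := by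
      intro i
      simp only [Matrix.mulVec, dotProduct]
      rw [Finset.mul_sum, ← Finset.sum_add_distrib]
      refine Finset.sum_congr rfl fun j _ => ?_
      have : (x₀ + γ • u) j = x₀ j + γ * u j := by
        simp [PiLp.add_apply, PiLp.smul_apply, smul_eq_mul]
      simp only [Pi.add_apply, Pi.smul_apply, smul_eq_mul]
      ring
    have hShat : (∑ i, Real.exp (-(B.mulVec (x₀ + γ • u) i))) = ∑ i, p i * Real.exp (v i) := by
      refine Finset.sum_congr rfl fun i _ => ?_
      rw [hmv i, hp, hv]
      simp only [neg_add]
      rw [Real.exp_add]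
    set M : ℝ := γ * (rowNormOne B * R) with hM
    have hvM : ∀ i, |v i| ≤ M := by
      intro i
      rw [hv, hM, abs_neg, abs_mul, abs_of_pos hγ0]
      refine mul_le_mul_of_nonneg_left ?_ hγ0.le
      refine (mulVec_abs_le B u i).trans ?_
      exact mul_le_mul_of_nonneg_left hR (rowNormOne_nonneg B)
    have hkey := lse_key hm p v (fun i => Real.exp_pos _) M hvM
    have hgL : γ * logSL B x₀ u = (∑ i, p i * v i) / (∑ i, p i) := by
      rw [logSL_apply, div_eq_inv_mul]
      have h1 : (∑ i, p i * v i) = γ * ∑ i, Real.exp (-(B.mulVec x₀ i)) * (-(B.mulVec u i)) := by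
        rw [Finset.mul_sum]
        refine Finset.sum_congr rfl fun i _ => ?_
        simp only [hp, hv]
        ring
      have h2 : (∑ i, p i) = ∑ i, Real.exp (-(B.mulVec x₀ i)) :=
        Finset.sum_congr rfl fun i _ => by simp only [hp]
      rw [h1, h2]
      ring
    rw [hShat, hgL]
    have hp' : (∑ i, Real.exp (-(B.mulVec x₀ i))) = ∑ i, p i := rfl
    rw [hp']
    linarith


lemma sum_erase_split {ι : Type*} [DecidableEq ι] (s : Finset ι) (f : ι → ℝ) (k : ι) :
    ∑ l ∈ s, f l = (∑ l ∈ s.erase k, f l) + (if k ∈ s then f k else 0) := by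
  by_cases h : k ∈ s
  · rw [if_pos h, ← Finset.add_sum_erase s f h]; ring
  · rw [if_neg h, Finset.erase_eq_self.2 h, add_zero]

lemma tri_split {K : ℕ} (k : Fin K) (g : Fin K → ℝ) :
    ∑ l ∈ univ.filter (fun l => l ≠ k), g l =
      (∑ l ∈ univ.filter (fun l => k < l), g l) +
      (∑ l ∈ univ.filter (fun l => l < k), g l) := by
  rw [Finset.sum_filter, Finset.sum_filter, Finset.sum_filter, ← Finset.sum_add_distrib]
  refine Finset.sum_congr rfl fun l _ => ?_
  rcases lt_trichotomy k l with h | h | h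
  · rw [if_pos h.ne', if_pos h, if_neg h.asymm, add_zero]
  · subst h; simp
  · rw [if_pos h.ne, if_neg h.asymm, if_pos h, zero_add]

lemma block_repr {K n : ℕ} {m : Fin K → ℕ}
    (A : ∀ k, Matrix (Fin (m k)) (Fin n) ℝ) (c : Fin K → ℝ)
    (W : Fin K → Fin K → ℝ) (hWsym : ∀ k l, W k l = W l k)
    (μ₁ : ℝ) (α : Fin K → Vec n) (k : Fin K) :
    ∃ Cst : ℝ, ∀ x : Vec n, fObj A c W μ₁ (Function.update α k x) =
      degW W k * c k * Real.log (∑ i, Real.exp (-((A k).mulVec x i)))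
      + μ₁ / 2 * ∑ l ∈ univ.filter (fun l => l ≠ k), W k l * ‖x - α l‖ ^ 2
      + Cst := by
  classical
  refine ⟨(∑ k' ∈ univ.erase k, degW W k' * c k' *
      Real.log (∑ i, Real.exp (-((A k').mulVec (α k') i))))
    + μ₁ / 2 * ∑ k' ∈ univ.erase k,
        ∑ l ∈ (univ.filter (fun l => k' < l)).erase k, W k' l * ‖α k' - α l‖ ^ 2, fun x => ?_⟩
  rw [fObj]
  -- Part A : the log sum
  have hA : (∑ k' : Fin K, degW W k' * c k' *
        Real.log (∑ i, Real.exp (-((A k').mulVec (Function.update α k x k') i))))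
      = degW W k * c k * Real.log (∑ i, Real.exp (-((A k).mulVec x i)))
        + ∑ k' ∈ univ.erase k, degW W k' * c k' *
            Real.log (∑ i, Real.exp (-((A k').mulVec (α k') i))) := by
    rw [← Finset.add_sum_erase univ _ (mem_univ k), Function.update_self]
    congr 1
    refine Finset.sum_congr rfl fun k' hk' => ?_
    rw [Function.update_of_ne (Finset.mem_erase.1 hk').1]
  -- Part B : the quadratic double sum
  have hB : (∑ k' : Fin K, ∑ l ∈ univ.filter (fun l => k' < l),
        W k' l * ‖Function.update α k x k' - Function.update α k x l‖ ^ 2)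
      = (∑ l ∈ univ.filter (fun l => l ≠ k), W k l * ‖x - α l‖ ^ 2)
        + ∑ k' ∈ univ.erase k,
            ∑ l ∈ (univ.filter (fun l => k' < l)).erase k, W k' l * ‖α k' - α l‖ ^ 2 := by
    rw [← Finset.add_sum_erase univ _ (mem_univ k)]
    have hGk : (∑ l ∈ univ.filter (fun l => k < l),
          W k l * ‖Function.update α k x k - Function.update α k x l‖ ^ 2)
        = ∑ l ∈ univ.filter (fun l => k < l), W k l * ‖x - α l‖ ^ 2 := by
      refine Finset.sum_congr rfl fun l hl => ?_
      have hlk : l ≠ k := by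
        have := (Finset.mem_filter.1 hl).2
        exact fun h => absurd (h ▸ this) (lt_irrefl k)
      rw [Function.update_self, Function.update_of_ne hlk]
    have hGk' : ∀ k' ∈ univ.erase k,
        (∑ l ∈ univ.filter (fun l => k' < l),
            W k' l * ‖Function.update α k x k' - Function.update α k x l‖ ^ 2)
          = (∑ l ∈ (univ.filter (fun l => k' < l)).erase k, W k' l * ‖α k' - α l‖ ^ 2)
            + (if k' < k then W k' k * ‖α k' - x‖ ^ 2 else 0) := by
      intro k' hk'
      have hk'k : k' ≠ k := (Finset.mem_erase.1 hk').1
      rw [sum_erase_split (univ.filter (fun l => k' < l)) _ k]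
      congr 1
      · refine Finset.sum_congr rfl fun l hl => ?_
        have hlk : l ≠ k := (Finset.mem_erase.1 hl).1
        rw [Function.update_of_ne hlk, Function.update_of_ne hk'k]
      · by_cases h : k' < k
        · rw [if_pos (by simp [h]), if_pos h, Function.update_self, Function.update_of_ne hk'k]
        · rw [if_neg (by simp [h]), if_neg h]
    rw [hGk, Finset.sum_congr rfl hGk', Finset.sum_add_distrib]
    have hlast : (∑ k' ∈ univ.erase k, if k' < k then W k' k * ‖α k' - x‖ ^ 2 else 0)
        = ∑ l ∈ univ.filter (fun l => l < k), W k l * ‖x - α l‖ ^ 2 := by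
      rw [Finset.sum_erase (a := k) (f := fun k' => if k' < k then W k' k * ‖α k' - x‖ ^ 2 else 0)
        univ (by simp), ← Finset.sum_filter]
      refine Finset.sum_congr rfl fun l _ => ?_
      rw [hWsym l k, norm_sub_rev]
    rw [hlast, tri_split k (fun l => W k l * ‖x - α l‖ ^ 2)]
    ring
  rw [hA, hB]
  ring

lemma main_block {K n : ℕ} {m : Fin K → ℕ}
    (A : ∀ k, Matrix (Fin (m k)) (Fin n) ℝ) (c : Fin K → ℝ) (hc : ∀ k, 0 ≤ c k)
    (W : Fin K → Fin K → ℝ) (hWsym : ∀ k l, W k l = W l k)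
    (hWnn : ∀ k l, k ≠ l → 0 ≤ W k l)
    (μ₁ : ℝ) (hμ₁ : 0 ≤ μ₁) (β : ℝ) (hβ : 0 < β)
    (k : Fin K) (α : Fin K → Vec n) (s : Vec n) (γ : ℝ)
    (hα : ∀ j, l1Norm (α j) ≤ β) (hs : l1Norm s ≤ β) (hγ0 : 0 < γ) (hγ1 : γ ≤ 1) :
    2 / γ ^ 2 *
        (fObj A c W μ₁ (Function.update α k ((1 - γ) • α k + γ • s))
          - fObj A c W μ₁ α
          - γ * ⟪s - α k, gradBlk (fObj A c W μ₁) α k⟫)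
      ≤ 4 * β ^ 2 * degW W k * (c k * rowNormOne (A k) ^ 2 + μ₁) := by
  classical
  obtain ⟨Cst, hrepr⟩ := block_repr A c W hWsym μ₁ α k
  have hdeg : 0 ≤ degW W k := by
    refine Finset.sum_nonneg fun l hl => ?_
    exact hWnn k l (Ne.symm (Finset.mem_filter.1 hl).2)
  set u : Vec n := s - α k with hu
  have hxhat : (1 - γ) • α k + γ • s = α k + γ • u := by
    rw [hu]; module
  -- the derivative
  set F : Finset (Fin K) := Finset.univ.filter (fun l => l ≠ k) with hF
  set LQ : Vec n →L[ℝ] ℝ := ∑ l ∈ F, W k l • normSqL (α l) (α k) with hLQ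
  set L : Vec n →L[ℝ] ℝ := (degW W k * c k) • logSL (A k) (α k) + (μ₁ / 2) • LQ with hL
  have hQd : HasFDerivAt (fun x : Vec n => ∑ l ∈ F, W k l * ‖x - α l‖ ^ 2) LQ (α k) := by
    rw [hLQ]
    exact HasFDerivAt.fun_sum fun l _ => (hasF_normsq (α l) (α k)).const_mul (W k l)
  have hLd : HasFDerivAt (fun x : Vec n => fObj A c W μ₁ (Function.update α k x)) L (α k) := by
    have h1 := ((hasF_logS (A k) (α k)).const_mul (degW W k * c k)).add
      (hQd.const_mul (μ₁ / 2))
    have h2 := h1.add_const Cst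
    have heq : (fun x : Vec n => fObj A c W μ₁ (Function.update α k x))
        = fun x : Vec n => (degW W k * c k * Real.log (∑ i, Real.exp (-((A k).mulVec x i)))
            + μ₁ / 2 * ∑ l ∈ F, W k l * ‖x - α l‖ ^ 2) + Cst := by
      funext x
      rw [hrepr x]
    rw [heq]
    rw [hL]
    exact h2
  have hgradeq : gradBlk (fObj A c W μ₁) α k
      = (InnerProductSpace.toDual ℝ (Vec n)).symm L := by
    rw [gradBlk]
    exact (hasFDerivAt_iff_hasGradientAt.1 hLd).gradient
  have hinner : ⟪s - α k, gradBlk (fObj A c W μ₁) α k⟫ = L u := by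
    rw [hgradeq, real_inner_comm, InnerProductSpace.toDual_symm_apply, hu]
  have hLval : L u = degW W k * c k * logSL (A k) (α k) u
      + μ₁ / 2 * ∑ l ∈ F, W k l * normSqL (α l) (α k) u := by
    rw [hL, hLQ]
    simp [ContinuousLinearMap.add_apply, ContinuousLinearMap.smul_apply,
      ContinuousLinearMap.sum_apply, smul_eq_mul]
  -- values of fObj
  have hfα : fObj A c W μ₁ α
      = degW W k * c k * Real.log (∑ i, Real.exp (-((A k).mulVec (α k) i)))
        + μ₁ / 2 * ∑ l ∈ F, W k l * ‖α k - α l‖ ^ 2 + Cst := by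
    have := hrepr (α k)
    rwa [Function.update_eq_self] at this
  have hfx := hrepr (α k + γ • u)
  have hQx : (∑ l ∈ F, W k l * ‖(α k + γ • u) - α l‖ ^ 2)
      = (∑ l ∈ F, W k l * ‖α k - α l‖ ^ 2)
        + γ * (∑ l ∈ F, W k l * normSqL (α l) (α k) u)
        + γ ^ 2 * ‖u‖ ^ 2 * degW W k := by
    have hterm : ∀ l ∈ F, W k l * ‖(α k + γ • u) - α l‖ ^ 2
        = W k l * ‖α k - α l‖ ^ 2 + γ * (W k l * normSqL (α l) (α k) u)
          + γ ^ 2 * ‖u‖ ^ 2 * W k l := by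
      intro l _
      rw [quad_remainder (α l) (α k) u γ]
      ring
    rw [Finset.sum_congr rfl hterm, Finset.sum_add_distrib, Finset.sum_add_distrib,
      ← Finset.mul_sum, ← Finset.mul_sum, degW, ← hF]
  -- the difference
  have hD : fObj A c W μ₁ (Function.update α k ((1 - γ) • α k + γ • s))
        - fObj A c W μ₁ α - γ * ⟪s - α k, gradBlk (fObj A c W μ₁) α k⟫
      = degW W k * c k *
          (Real.log (∑ i, Real.exp (-((A k).mulVec (α k + γ • u) i)))
            - Real.log (∑ i, Real.exp (-((A k).mulVec (α k) i)))
            - γ * logSL (A k) (α k) u)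
        + μ₁ / 2 * (γ ^ 2 * ‖u‖ ^ 2 * degW W k) := by
    rw [hxhat, hinner, hfx, hQx, hfα, hLval]
    simp only [WithLp.ofLp_add, WithLp.ofLp_smul]
    ring
  rw [hD]
  -- bounds
  have hl1u : l1Norm u ≤ 2 * β := by
    have hj : ∀ j, |u j| ≤ |s j| + |α k j| := by
      intro j
      have : u j = s j - α k j := by simp [hu, PiLp.sub_apply]
      rw [this, sub_eq_add_neg]
      exact (abs_add_le _ _).trans_eq (by rw [abs_neg])
    calc l1Norm u ≤ ∑ j, (|s j| + |α k j|) := Finset.sum_le_sum fun j _ => hj j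
      _ = l1Norm s + l1Norm (α k) := by
          rw [l1Norm, l1Norm, ← Finset.sum_add_distrib]
      _ ≤ β + β := add_le_add hs (hα k)
      _ = 2 * β := by ring
  have hlogb := log_remainder (A k) (α k) u γ hγ0 (2 * β) (by linarith) hl1u
  have hnu : ‖u‖ ^ 2 ≤ (2 * β) ^ 2 :=
    (norm_le_l1 u).trans (pow_le_pow_left₀ (l1Norm_nonneg u) hl1u 2)
  have h2γ : (0:ℝ) ≤ 2 / γ ^ 2 := by positivity
  have hck : 0 ≤ degW W k * c k := mul_nonneg hdeg (hc k)
  calc 2 / γ ^ 2 * (degW W k * c k *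
          (Real.log (∑ i, Real.exp (-((A k).mulVec (α k + γ • u) i)))
            - Real.log (∑ i, Real.exp (-((A k).mulVec (α k) i)))
            - γ * logSL (A k) (α k) u)
        + μ₁ / 2 * (γ ^ 2 * ‖u‖ ^ 2 * degW W k))
      ≤ 2 / γ ^ 2 * (degW W k * c k * ((γ * (rowNormOne (A k) * (2 * β))) ^ 2 / 2)
          + μ₁ / 2 * (γ ^ 2 * (2 * β) ^ 2 * degW W k)) := by
        refine mul_le_mul_of_nonneg_left (add_le_add ?_ ?_) h2γ
        · exact mul_le_mul_of_nonneg_left hlogb hck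
        · refine mul_le_mul_of_nonneg_left ?_ (by linarith)
          exact mul_le_mul_of_nonneg_right
            (mul_le_mul_of_nonneg_left hnu (sq_nonneg γ)) hdeg
    _ = 4 * β ^ 2 * degW W k * (c k * rowNormOne (A k) ^ 2 + μ₁) := by
        field_simp
        ring

end Aux

/-- The partial curvature constant `C_f^k` of `f` over `M` (a supremum of relative
deviations of `f` from its blockwise linear approximations). -/
noncomputable def blockCurvature {K n : ℕ} {m : Fin K → ℕ}
    (A : ∀ k, Matrix (Fin (m k)) (Fin n) ℝ) (c : Fin K → ℝ)
    (W : Fin K → Fin K → ℝ) (μ₁ β : ℝ) (k : Fin K) : ℝ :=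
  sSup {v : ℝ | ∃ (α : Fin K → Vec n) (s : Vec n) (γ : ℝ),
    (∀ j, l1Norm (α j) ≤ β) ∧ l1Norm s ≤ β ∧ 0 < γ ∧ γ ≤ 1 ∧
    v = 2 / γ ^ 2 *
      (fObj A c W μ₁ (Function.update α k ((1 - γ) • α k + γ • s))
        - fObj A c W μ₁ α
        - γ * ⟪s - α k, gradBlk (fObj A c W μ₁) α k⟫)}

/-- Curvature bound (Lemma 1, blockwise form).
For every user `k`, feasible `α`, `s_k` with `‖s_k‖₁ ≤ β` and `γ ∈ (0,1]`,
`(2/γ²)(f(α̂) − f(α) − γ⟨s_k − α_k, ∇_k f(α)⟩) ≤ 4β² d_k(w)(c_k‖A_k‖₁² + μ₁)`;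
consequently `C⊗_f = Σ_k C_f^k ≤ 4β² Σ_k d_k(w)(c_k‖A_k‖₁² + μ₁)`. -/
theorem curvature_bound
    (K n : ℕ) (hK : 1 ≤ K) (m : Fin K → ℕ)
    (A : ∀ k, Matrix (Fin (m k)) (Fin n) ℝ)
    (c : Fin K → ℝ) (hc : ∀ k, 0 ≤ c k)
    (W : Fin K → Fin K → ℝ) (hWsym : ∀ k l, W k l = W l k)
    (hWnn : ∀ k l, k ≠ l → 0 ≤ W k l)
    (μ₁ : ℝ) (hμ₁ : 0 ≤ μ₁) (β : ℝ) (hβ : 0 < β) :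
    (∀ (k : Fin K) (α : Fin K → Vec n) (s : Vec n) (γ : ℝ),
      (∀ j, l1Norm (α j) ≤ β) → l1Norm s ≤ β → 0 < γ → γ ≤ 1 →
      2 / γ ^ 2 *
          (fObj A c W μ₁ (Function.update α k ((1 - γ) • α k + γ • s))
            - fObj A c W μ₁ α
            - γ * ⟪s - α k, gradBlk (fObj A c W μ₁) α k⟫)
        ≤ 4 * β ^ 2 * degW W k * (c k * rowNormOne (A k) ^ 2 + μ₁)) ∧
    (∑ k, blockCurvature A c W μ₁ β k
      ≤ 4 * β ^ 2 * ∑ k, degW W k * (c k * rowNormOne (A k) ^ 2 + μ₁)) := by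
  have part1 : ∀ (k : Fin K) (α : Fin K → Vec n) (s : Vec n) (γ : ℝ),
      (∀ j, l1Norm (α j) ≤ β) → l1Norm s ≤ β → 0 < γ → γ ≤ 1 →
      2 / γ ^ 2 *
          (fObj A c W μ₁ (Function.update α k ((1 - γ) • α k + γ • s))
            - fObj A c W μ₁ α
            - γ * ⟪s - α k, gradBlk (fObj A c W μ₁) α k⟫)
        ≤ 4 * β ^ 2 * degW W k * (c k * rowNormOne (A k) ^ 2 + μ₁) :=
    fun k α s γ hα hs hγ0 hγ1 =>
      main_block A c hc W hWsym hWnn μ₁ hμ₁ β hβ k α s γ hα hs hγ0 hγ1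
  refine ⟨part1, ?_⟩
  have hbound : ∀ k : Fin K, blockCurvature A c W μ₁ β k
      ≤ 4 * β ^ 2 * (degW W k * (c k * rowNormOne (A k) ^ 2 + μ₁)) := by
    intro k
    have hdeg : 0 ≤ degW W k :=
      Finset.sum_nonneg fun l hl => hWnn k l (Ne.symm (Finset.mem_filter.1 hl).2)
    have hB0 : 0 ≤ 4 * β ^ 2 * (degW W k * (c k * rowNormOne (A k) ^ 2 + μ₁)) := by
      refine mul_nonneg (by positivity) ?_
      exact mul_nonneg hdeg (add_nonneg (mul_nonneg (hc k) (sq_nonneg _)) hμ₁)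
    refine Real.sSup_le ?_ hB0
    rintro v ⟨α, s, γ, hα, hs, hγ0, hγ1, rfl⟩
    have := part1 k α s γ hα hs hγ0 hγ1
    linarith [this]
  calc ∑ k, blockCurvature A c W μ₁ β k
      ≤ ∑ k, 4 * β ^ 2 * (degW W k * (c k * rowNormOne (A k) ^ 2 + μ₁)) :=
        Finset.sum_le_sum fun k _ => hbound k
    _ = 4 * β ^ 2 * ∑ k, degW W k * (c k * rowNormOne (A k) ^ 2 + μ₁) :=
        (Finset.mul_sum _ _ _).symm
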